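/- Let p: ℝ → ℝ be continuous and 2π-periodic, a > 0 and σ ∈ ℝ. With α(ψ) := ∫₀^ψ dt/(a²cos²t + a⁻²sin²t) and p_{a,σ}(ψ) := p(α(ψ) + σ) · (a⁻²sin²ψ + a²cos²ψ)^{1/2}, one has ∫₀^{2π} p_{a,σ}(ψ) cos(2ψ) dψ = 𝓘₁(σ,a) and ∫₀^{2π} p_{a,σ}(ψ) sin(2ψ) dψ = 𝓘₂(σ,a). -/

import Mathlib

open Real Set intervalIntegral

/-- The reparametrization angle α(ψ) induced by the map (x,y) ↦ (ax, y/a). -/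
noncomputable def alphaFun (a ψ : ℝ) : ℝ :=
  ∫ t in (0:ℝ)..ψ, 1 / (a ^ 2 * Real.cos t ^ 2 + (a ^ 2)⁻¹ * Real.sin t ^ 2)

/-- The support function of the image of the domain with support function p under
the rotation by σ followed by (x,y) ↦ (ax, y/a). -/
noncomputable def suppTrans (p : ℝ → ℝ) (a σ ψ : ℝ) : ℝ :=
  p (alphaFun a ψ + σ) *
    Real.sqrt ((a ^ 2)⁻¹ * Real.sin ψ ^ 2 + a ^ 2 * Real.cos ψ ^ 2)

/-- 𝓘₁(σ,a). -/
noncomputable def I1 (p : ℝ → ℝ) (σ a : ℝ) : ℝ :=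
  ∫ α in (0:ℝ)..(2 * π), p (α + σ) *
    ((a ^ 2)⁻¹ * Real.cos α ^ 2 - a ^ 2 * Real.sin α ^ 2) *
    ((a ^ 2)⁻¹ * Real.cos α ^ 2 + a ^ 2 * Real.sin α ^ 2) ^ (-(5:ℝ) / 2)

/-- 𝓘₂(σ,a). -/
noncomputable def I2 (p : ℝ → ℝ) (σ a : ℝ) : ℝ :=
  ∫ α in (0:ℝ)..(2 * π), p (α + σ) *
    (2 * Real.sin α * Real.cos α) *
    ((a ^ 2)⁻¹ * Real.cos α ^ 2 + a ^ 2 * Real.sin α ^ 2) ^ (-(5:ℝ) / 2)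

lemma quad_pos {b c : ℝ} (hb : 0 < b) (hc : 0 < c) (x : ℝ) :
    0 < b * Real.cos x ^ 2 + c * Real.sin x ^ 2 := by
  have h1 : Real.sin x ^ 2 + Real.cos x ^ 2 = 1 := Real.sin_sq_add_cos_sq x
  rcases eq_or_ne (Real.cos x) 0 with h | h
  · have hs : Real.sin x ^ 2 = 1 := by rw [h] at h1; simpa using h1
    rw [h, hs]; simpa using hc
  · have : 0 < Real.cos x ^ 2 := by positivity
    nlinarith [sq_nonneg (Real.sin x)]

/-- The denominator. -/
noncomputable def Efun (a ψ : ℝ) : ℝ := a ^ 2 * Real.cos ψ ^ 2 + (a ^ 2)⁻¹ * Real.sin ψ ^ 2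

lemma Efun_pos {a : ℝ} (ha : 0 < a) (ψ : ℝ) : 0 < Efun a ψ :=
  quad_pos (by positivity) (by positivity) ψ

lemma Efun_cont (a : ℝ) : Continuous (Efun a) := by
  unfold Efun; continuity

lemma inv_Efun_cont {a : ℝ} (ha : 0 < a) : Continuous fun t => 1 / Efun a t :=
  continuous_const.div (Efun_cont a) fun t => (Efun_pos ha t).ne'

lemma alphaFun_hasDerivAt {a : ℝ} (ha : 0 < a) (ψ : ℝ) :
    HasDerivAt (alphaFun a) (1 / Efun a ψ) ψ := by
  have h := intervalIntegral.integral_hasDerivAt_right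
    ((inv_Efun_cont ha).intervalIntegrable 0 ψ)
    ((inv_Efun_cont ha).stronglyMeasurableAtFilter _ _)
    (inv_Efun_cont ha).continuousAt
  exact h

noncomputable def cFun (a ψ : ℝ) : ℝ := a * Real.cos ψ / Real.sqrt (Efun a ψ)
noncomputable def sFun (a ψ : ℝ) : ℝ := Real.sin ψ / (a * Real.sqrt (Efun a ψ))

lemma Efun_hasDerivAt (a ψ : ℝ) :
    HasDerivAt (Efun a)
      (a ^ 2 * (2 * Real.cos ψ * -Real.sin ψ) + (a ^ 2)⁻¹ * (2 * Real.sin ψ * Real.cos ψ)) ψ := by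
  have h1 : HasDerivAt (fun ψ => Real.cos ψ ^ 2) (2 * Real.cos ψ * -Real.sin ψ) ψ := by
    simpa using ((Real.hasDerivAt_cos ψ).fun_pow 2)
  have h2 : HasDerivAt (fun ψ => Real.sin ψ ^ 2) (2 * Real.sin ψ * Real.cos ψ) ψ := by
    simpa using ((Real.hasDerivAt_sin ψ).fun_pow 2)
  exact (h1.const_mul _).add (h2.const_mul _)

lemma sqrtE_hasDerivAt {a : ℝ} (ha : 0 < a) (ψ : ℝ) :
    HasDerivAt (fun ψ => Real.sqrt (Efun a ψ))
      ((a ^ 2 * (2 * Real.cos ψ * -Real.sin ψ) + (a ^ 2)⁻¹ * (2 * Real.sin ψ * Real.cos ψ)) /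
        (2 * Real.sqrt (Efun a ψ))) ψ :=
  (Efun_hasDerivAt a ψ).sqrt (Efun_pos ha ψ).ne'

lemma cFun_hasDerivAt {a : ℝ} (ha : 0 < a) (ψ : ℝ) :
    HasDerivAt (cFun a) (-(1 / Efun a ψ) * sFun a ψ) ψ := by
  set r := Real.sqrt (Efun a ψ) with hrdef
  have hE := Efun_pos ha ψ
  have hr : 0 < r := Real.sqrt_pos.2 hE
  have hr2 : r ^ 2 = Efun a ψ := Real.sq_sqrt hE.le
  have h := ((Real.hasDerivAt_cos ψ).const_mul a).div (sqrtE_hasDerivAt ha ψ) hr.ne'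
  convert (show HasDerivAt (cFun a) _ ψ from h) using 1
  have h1 : Real.sin ψ ^ 2 + Real.cos ψ ^ 2 = 1 := Real.sin_sq_add_cos_sq ψ
  rw [← hrdef]
  have hr2' : r ^ 2 = a ^ 2 * Real.cos ψ ^ 2 + (a ^ 2)⁻¹ * Real.sin ψ ^ 2 := hr2
  have hQ : a ^ 2 * r ^ 2 = a ^ 4 * Real.cos ψ ^ 2 + Real.sin ψ ^ 2 := by
    rw [hr2']; field_simp
  have hEr : Efun a ψ = r ^ 2 := hr2.symm
  rw [show sFun a ψ = Real.sin ψ / (a * r) from rfl, hEr]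
  field_simp
  linear_combination Real.sin ψ * hQ + Real.sin ψ * h1

lemma sFun_hasDerivAt {a : ℝ} (ha : 0 < a) (ψ : ℝ) :
    HasDerivAt (sFun a) ((1 / Efun a ψ) * cFun a ψ) ψ := by
  set r := Real.sqrt (Efun a ψ) with hrdef
  have hE := Efun_pos ha ψ
  have hr : 0 < r := Real.sqrt_pos.2 hE
  have hr2 : r ^ 2 = Efun a ψ := Real.sq_sqrt hE.le
  have h := (Real.hasDerivAt_sin ψ).div ((sqrtE_hasDerivAt ha ψ).const_mul a) (by positivity)
  convert (show HasDerivAt (sFun a) _ ψ from h) using 1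
  have h1 : Real.sin ψ ^ 2 + Real.cos ψ ^ 2 = 1 := Real.sin_sq_add_cos_sq ψ
  rw [← hrdef]
  have hr2' : r ^ 2 = a ^ 2 * Real.cos ψ ^ 2 + (a ^ 2)⁻¹ * Real.sin ψ ^ 2 := hr2
  have hQ : a ^ 2 * r ^ 2 = a ^ 4 * Real.cos ψ ^ 2 + Real.sin ψ ^ 2 := by
    rw [hr2']; field_simp
  have hEr : Efun a ψ = r ^ 2 := hr2.symm
  rw [show cFun a ψ = a * Real.cos ψ / r from rfl, hEr]
  field_simp
  linear_combination (-Real.cos ψ) * hQ + (-(a^4*Real.cos ψ)) * h1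

lemma alphaFun_zero (a : ℝ) : alphaFun a 0 = 0 := by
  unfold alphaFun; simp

lemma cos_sin_alphaFun {a : ℝ} (ha : 0 < a) (ψ : ℝ) :
    Real.cos (alphaFun a ψ) = cFun a ψ ∧ Real.sin (alphaFun a ψ) = sFun a ψ := by
  set F : ℝ → ℝ := fun ψ => Real.cos (alphaFun a ψ) * cFun a ψ +
    Real.sin (alphaFun a ψ) * sFun a ψ with hF
  have hFd : ∀ x, HasDerivAt F 0 x := by
    intro x
    have hα := alphaFun_hasDerivAt ha x
    have hcos : HasDerivAt (fun ψ => Real.cos (alphaFun a ψ))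
        (-Real.sin (alphaFun a x) * (1 / Efun a x)) x := hα.cos
    have hsin : HasDerivAt (fun ψ => Real.sin (alphaFun a ψ))
        (Real.cos (alphaFun a x) * (1 / Efun a x)) x := hα.sin
    have := (hcos.mul (cFun_hasDerivAt ha x)).add (hsin.mul (sFun_hasDerivAt ha x))
    convert (show HasDerivAt F _ x from this) using 1
    ring
  have hconst : F ψ = F 0 :=
    is_const_of_deriv_eq_zero (fun x => (hFd x).differentiableAt)
      (fun x => (hFd x).deriv) ψ 0
  have hE0 : Efun a 0 = a ^ 2 := by unfold Efun; simp
  have hc0 : cFun a 0 = 1 := by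
    unfold cFun; rw [hE0, Real.sqrt_sq ha.le]; simp [ha.ne']
  have hs0 : sFun a 0 = 0 := by unfold sFun; simp
  have hF0 : F 0 = 1 := by
    rw [hF]; simp only [alphaFun_zero, Real.cos_zero, Real.sin_zero, hc0, hs0]; ring
  have hFψ : Real.cos (alphaFun a ψ) * cFun a ψ + Real.sin (alphaFun a ψ) * sFun a ψ = 1 := by
    rw [← hF0, ← hconst]
  -- c² + s² = 1
  have hE := Efun_pos ha ψ
  have hr : 0 < Real.sqrt (Efun a ψ) := Real.sqrt_pos.2 hE
  have hr2 : Real.sqrt (Efun a ψ) ^ 2 = Efun a ψ := Real.sq_sqrt hE.le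
  have hcs : cFun a ψ ^ 2 + sFun a ψ ^ 2 = 1 := by
    have h1 : Real.sin ψ ^ 2 + Real.cos ψ ^ 2 = 1 := Real.sin_sq_add_cos_sq ψ
    have step : cFun a ψ ^ 2 + sFun a ψ ^ 2 =
        (a ^ 2 * Real.cos ψ ^ 2 + (a ^ 2)⁻¹ * Real.sin ψ ^ 2) / Efun a ψ := by
      unfold cFun sFun
      rw [div_pow, div_pow, mul_pow, mul_pow, Real.sq_sqrt hE.le]
      field_simp
    rw [step, show a ^ 2 * Real.cos ψ ^ 2 + (a ^ 2)⁻¹ * Real.sin ψ ^ 2 = Efun a ψ from rfl,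
      div_self hE.ne']
  have h2 : Real.cos (alphaFun a ψ) ^ 2 + Real.sin (alphaFun a ψ) ^ 2 = 1 := by
    rw [add_comm]; exact Real.sin_sq_add_cos_sq _
  have key : (Real.cos (alphaFun a ψ) - cFun a ψ) ^ 2 +
      (Real.sin (alphaFun a ψ) - sFun a ψ) ^ 2 = 0 := by nlinarith
  constructor
  · nlinarith [sq_nonneg (Real.cos (alphaFun a ψ) - cFun a ψ),
      sq_nonneg (Real.sin (alphaFun a ψ) - sFun a ψ)]
  · nlinarith [sq_nonneg (Real.cos (alphaFun a ψ) - cFun a ψ),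
      sq_nonneg (Real.sin (alphaFun a ψ) - sFun a ψ)]

lemma alphaFun_strictMono {a : ℝ} (ha : 0 < a) : StrictMono (alphaFun a) :=
  strictMono_of_deriv_pos (fun x => by
    rw [(alphaFun_hasDerivAt ha x).deriv]
    have := Efun_pos ha x
    positivity)

lemma alphaFun_pi_div_two {a : ℝ} (ha : 0 < a) : alphaFun a (π / 2) = π / 2 := by
  have hsin : Real.sin (alphaFun a (π / 2)) = 1 := by
    rw [(cos_sin_alphaFun ha (π / 2)).2]
    unfold sFun Efun
    rw [Real.sin_pi_div_two, Real.cos_pi_div_two]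
    rw [show a ^ 2 * 0 ^ 2 + (a ^ 2)⁻¹ * 1 ^ 2 = (a ^ 2)⁻¹ by ring]
    rw [Real.sqrt_inv, Real.sqrt_sq ha.le]
    field_simp
  have hpos : 0 < alphaFun a (π / 2) := by
    have := alphaFun_strictMono ha (show (0:ℝ) < π / 2 by positivity)
    rwa [alphaFun_zero a] at this
  have hlt : alphaFun a (π / 2) < π := by
    by_contra hge
    push_neg at hge
    have hcont : ContinuousOn (alphaFun a) (Icc 0 (π / 2)) :=
      (fun x _ => ((alphaFun_hasDerivAt ha x).differentiableAt.continuousAt).continuousWithinAt)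
    have hmem : π ∈ Icc (alphaFun a 0) (alphaFun a (π / 2)) := by
      rw [alphaFun_zero a]
      exact ⟨Real.pi_pos.le, hge⟩
    obtain ⟨ψ₀, hψ₀, hval⟩ := intermediate_value_Icc (by positivity) hcont hmem
    have hψ₀0 : ψ₀ ≠ 0 := by
      intro h; rw [h, alphaFun_zero a] at hval; exact Real.pi_ne_zero hval.symm
    have hψpos : 0 < ψ₀ := lt_of_le_of_ne hψ₀.1 (Ne.symm hψ₀0)
    have hsin0 : Real.sin (alphaFun a ψ₀) = 0 := by rw [hval]; exact Real.sin_pi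
    have : 0 < Real.sin (alphaFun a ψ₀) := by
      rw [(cos_sin_alphaFun ha ψ₀).2]
      unfold sFun
      have : 0 < Real.sin ψ₀ := Real.sin_pos_of_pos_of_lt_pi hψpos
        (lt_of_le_of_lt hψ₀.2 (by linarith [Real.pi_pos]))
      have hEψ := Real.sqrt_pos.2 (Efun_pos ha ψ₀)
      positivity
    exact absurd hsin0 this.ne'
  obtain ⟨k, hk⟩ := Real.sin_eq_one_iff.1 hsin
  have hπ := Real.pi_pos
  have hk0 : k = 0 := by
    have h1 : (k : ℝ) < 1 := by nlinarith
    have h2 : (-1 : ℝ) < (k : ℝ) := by nlinarith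
    have h1' : k < 1 := by exact_mod_cast h1
    have h2' : -1 < k := by exact_mod_cast h2
    omega
  rw [hk0] at hk
  simpa using hk.symm

lemma alphaFun_two_pi {a : ℝ} (ha : 0 < a) : alphaFun a (2 * π) = 2 * π := by
  set f : ℝ → ℝ := fun t => 1 / Efun a t with hf
  have hint : ∀ u v : ℝ, IntervalIntegrable f MeasureTheory.volume u v :=
    fun u v => (inv_Efun_cont ha).intervalIntegrable u v
  have hαeq : ∀ ψ : ℝ, alphaFun a ψ = ∫ t in (0:ℝ)..ψ, f t := fun ψ => rfl
  have hper : ∀ t, f (t + π) = f t := by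
    intro t
    simp only [hf, Efun, Real.cos_add_pi, Real.sin_add_pi]
    ring_nf
  have hsym : ∀ t, f (π - t) = f t := by
    intro t
    simp only [hf, Efun, Real.cos_pi_sub, Real.sin_pi_sub]
    ring_nf
  have h1 : (∫ t in π..(2*π), f t) = ∫ t in (0:ℝ)..π, f t := by
    have h := intervalIntegral.integral_comp_add_right (a := (0:ℝ)) (b := π) f π
    rw [zero_add, show π + π = 2 * π by ring] at h
    rw [← h]
    simp only [hper]
  have h2 : (∫ t in (π/2)..π, f t) = ∫ t in (0:ℝ)..(π/2), f t := by
    have h := intervalIntegral.integral_comp_sub_left (a := (0:ℝ)) (b := π/2) f π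
    rw [sub_zero, show π - π / 2 = π / 2 by ring] at h
    rw [← h]
    simp only [hsym]
  have hsplit1 : alphaFun a (2 * π) = (∫ t in (0:ℝ)..π, f t) + ∫ t in π..(2*π), f t := by
    rw [hαeq, (intervalIntegral.integral_add_adjacent_intervals (hint 0 π) (hint π (2*π)))]
  have hsplit2 : alphaFun a π = (∫ t in (0:ℝ)..(π/2), f t) + ∫ t in (π/2)..π, f t := by
    rw [hαeq, (intervalIntegral.integral_add_adjacent_intervals (hint 0 (π/2)) (hint (π/2) π))]
  have hαπ : alphaFun a π = π := by
    have hhalf := alphaFun_pi_div_two ha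
    rw [hsplit2, h2, ← hαeq, hhalf]
    linarith
  rw [hsplit1, h1, ← hαeq, hαπ]
  linarith [hαπ, hsplit2]

lemma cov {a : ℝ} (ha : 0 < a) {g : ℝ → ℝ} (hg : Continuous g) :
    (∫ α in (0:ℝ)..(2*π), g α) = ∫ ψ in (0:ℝ)..(2*π), (1 / Efun a ψ) * g (alphaFun a ψ) := by
  have h := intervalIntegral.integral_comp_smul_deriv (a := (0:ℝ)) (b := 2*π)
    (f := alphaFun a) (f' := fun ψ => 1 / Efun a ψ)
    (fun x _ => alphaFun_hasDerivAt ha x) ((inv_Efun_cont ha).continuousOn) hg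
  rw [alphaFun_zero, alphaFun_two_pi ha] at h
  rw [← h]
  simp only [smul_eq_mul, Function.comp]

lemma rpow_key {r : ℝ} (hr : 0 < r) : ((r ^ 2)⁻¹ : ℝ) ^ (-(5:ℝ)/2) = r ^ (5:ℕ) := by
  have e1 : ((r : ℝ) ^ 2)⁻¹ = r ^ ((-2 : ℝ)) := by
    rw [show (-2:ℝ) = -((2:ℕ):ℝ) by norm_num, Real.rpow_neg hr.le, Real.rpow_natCast]
  rw [e1, ← Real.rpow_natCast r 5, ← Real.rpow_mul hr.le]
  norm_num


/-- Change of variables in the second Fourier coefficients of the transformed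
support function. -/
theorem second_Fourier_coefficients_eq_I1_I2
    (p : ℝ → ℝ) (hp : Continuous p) (hper : ∀ α, p (α + 2 * π) = p α)
    (a σ : ℝ) (ha : 0 < a) :
    (∫ ψ in (0:ℝ)..(2 * π), suppTrans p a σ ψ * Real.cos (2 * ψ)) = I1 p σ a ∧
    (∫ ψ in (0:ℝ)..(2 * π), suppTrans p a σ ψ * Real.sin (2 * ψ)) = I2 p σ a := by
  have hXpos : ∀ α : ℝ, 0 < (a ^ 2)⁻¹ * Real.cos α ^ 2 + a ^ 2 * Real.sin α ^ 2 :=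
    quad_pos (by positivity) (by positivity)
  have hXc : Continuous fun α => (a ^ 2)⁻¹ * Real.cos α ^ 2 + a ^ 2 * Real.sin α ^ 2 := by
    continuity
  have h5 : Continuous fun α =>
      ((a ^ 2)⁻¹ * Real.cos α ^ 2 + a ^ 2 * Real.sin α ^ 2) ^ (-(5:ℝ)/2) :=
    hXc.rpow_const fun x => Or.inl (hXpos x).ne'
  have hpshift : Continuous fun α => p (α + σ) := hp.comp (continuous_id.add continuous_const)
  -- common facts for pointwise computation
  have point : ∀ ψ : ℝ,
      Real.cos (alphaFun a ψ) = cFun a ψ ∧ Real.sin (alphaFun a ψ) = sFun a ψ :=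
    cos_sin_alphaFun ha
  constructor
  · -- I1
    have hg : Continuous fun α => p (α + σ) *
        ((a ^ 2)⁻¹ * Real.cos α ^ 2 - a ^ 2 * Real.sin α ^ 2) *
        ((a ^ 2)⁻¹ * Real.cos α ^ 2 + a ^ 2 * Real.sin α ^ 2) ^ (-(5:ℝ)/2) :=
      (hpshift.mul (by continuity)).mul h5
    have h := cov ha hg
    rw [show I1 p σ a = ∫ α in (0:ℝ)..(2*π), p (α + σ) *
        ((a ^ 2)⁻¹ * Real.cos α ^ 2 - a ^ 2 * Real.sin α ^ 2) *
        ((a ^ 2)⁻¹ * Real.cos α ^ 2 + a ^ 2 * Real.sin α ^ 2) ^ (-(5:ℝ)/2) from rfl, h]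
    apply intervalIntegral.integral_congr
    intro ψ _
    have hE := Efun_pos ha ψ
    set r := Real.sqrt (Efun a ψ) with hrdef
    have hr : 0 < r := Real.sqrt_pos.2 hE
    have hr2 : r ^ 2 = Efun a ψ := Real.sq_sqrt hE.le
    have h1 : Real.sin ψ ^ 2 + Real.cos ψ ^ 2 = 1 := Real.sin_sq_add_cos_sq ψ
    have hsupp : suppTrans p a σ ψ = p (alphaFun a ψ + σ) * r := by
      unfold suppTrans
      rw [show (a ^ 2)⁻¹ * Real.sin ψ ^ 2 + a ^ 2 * Real.cos ψ ^ 2 = Efun a ψ by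
        unfold Efun; ring]
    have hmid : (a ^ 2)⁻¹ * cFun a ψ ^ 2 - a ^ 2 * sFun a ψ ^ 2 =
        (Real.cos ψ ^ 2 - Real.sin ψ ^ 2) / r ^ 2 := by
      unfold cFun sFun
      rw [← hrdef]
      field_simp
    have hbase : (a ^ 2)⁻¹ * cFun a ψ ^ 2 + a ^ 2 * sFun a ψ ^ 2 = (r ^ 2)⁻¹ := by
      unfold cFun sFun
      rw [← hrdef]
      field_simp
      linear_combination h1
    beta_reduce
    rw [(point ψ).1, (point ψ).2, hmid, hbase, rpow_key hr, hsupp,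
      show Efun a ψ = r ^ 2 from hr2.symm, Real.cos_two_mul]
    field_simp
    linear_combination p (alphaFun a ψ + σ) * h1
  · -- I2
    have hg : Continuous fun α => p (α + σ) *
        (2 * Real.sin α * Real.cos α) *
        ((a ^ 2)⁻¹ * Real.cos α ^ 2 + a ^ 2 * Real.sin α ^ 2) ^ (-(5:ℝ)/2) :=
      (hpshift.mul (by continuity)).mul h5
    have h := cov ha hg
    rw [show I2 p σ a = ∫ α in (0:ℝ)..(2*π), p (α + σ) *
        (2 * Real.sin α * Real.cos α) *
        ((a ^ 2)⁻¹ * Real.cos α ^ 2 + a ^ 2 * Real.sin α ^ 2) ^ (-(5:ℝ)/2) from rfl, h]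
    apply intervalIntegral.integral_congr
    intro ψ _
    have hE := Efun_pos ha ψ
    set r := Real.sqrt (Efun a ψ) with hrdef
    have hr : 0 < r := Real.sqrt_pos.2 hE
    have hr2 : r ^ 2 = Efun a ψ := Real.sq_sqrt hE.le
    have h1 : Real.sin ψ ^ 2 + Real.cos ψ ^ 2 = 1 := Real.sin_sq_add_cos_sq ψ
    have hsupp : suppTrans p a σ ψ = p (alphaFun a ψ + σ) * r := by
      unfold suppTrans
      rw [show (a ^ 2)⁻¹ * Real.sin ψ ^ 2 + a ^ 2 * Real.cos ψ ^ 2 = Efun a ψ by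
        unfold Efun; ring]
    have hmid : 2 * sFun a ψ * cFun a ψ = (2 * Real.sin ψ * Real.cos ψ) / r ^ 2 := by
      unfold cFun sFun
      rw [← hrdef]
      field_simp
    have hbase : (a ^ 2)⁻¹ * cFun a ψ ^ 2 + a ^ 2 * sFun a ψ ^ 2 = (r ^ 2)⁻¹ := by
      unfold cFun sFun
      rw [← hrdef]
      field_simp
      linear_combination h1
    beta_reduce
    rw [(point ψ).1, (point ψ).2, hmid, hbase, rpow_key hr, hsupp,
      show Efun a ψ = r ^ 2 from hr2.symm, Real.sin_two_mul]
    field_simp
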